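/- Every finite sequence (a_1, …, a_n) of real numbers can be partitioned into consecutive blocks S_1, S_2, …, S_m, X, where possibly m = 0 or X is missing, such that each S_i is a slice, X is an ev-sequence, and the sequence (s_1, …, s_m) of slice-weights is strictly decreasing. -/

import Mathlib

/-- Condition (ASC): all even-length initial alternating sums are ≤ 0. -/
def ASC (l : List ℝ) : Prop :=
  ∀ k : ℕ, 1 ≤ k → 2 * k ≤ l.length → (l.take (2 * k)).alternatingSum ≤ 0

/-- A slice: odd length, and both the sequence and its reverse satisfy (ASC). -/
def IsSlice (l : List ℝ) : Prop := Odd l.length ∧ ASC l ∧ ASC l.reverse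

/-- An ev-sequence: even length, satisfying (ASC). -/
def IsEvSeq (l : List ℝ) : Prop := Even l.length ∧ ASC l

open List

namespace SlicePartitionAux

/-- Prefix alternating sum. -/
noncomputable def B (l : List ℝ) (k : ℕ) : ℝ := (l.take k).alternatingSum

/-- Signed prefix alternating sum. -/
noncomputable def dd (l : List ℝ) (k : ℕ) : ℝ := (-1) ^ k * B l k

lemma B_zero (l : List ℝ) : B l 0 = 0 := by simp [B]

lemma B_of_le (l : List ℝ) {k : ℕ} (h : l.length ≤ k) : B l k = l.alternatingSum := by
  simp [B, take_of_length_le h]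

lemma altSum_append (p q : List ℝ) :
    (p ++ q).alternatingSum = p.alternatingSum + (-1 : ℝ) ^ p.length * q.alternatingSum := by
  induction p with
  | nil => simp
  | cons a p ih =>
      rw [cons_append, alternatingSum_cons, ih, alternatingSum_cons]
      rw [length_cons, pow_succ]
      ring

lemma altSum_reverse (l : List ℝ) :
    l.reverse.alternatingSum = (-1 : ℝ) ^ (l.length + 1) * l.alternatingSum := by
  induction l with
  | nil => simp
  | cons a l ih =>
      rw [reverse_cons, altSum_append, ih, alternatingSum_singleton, alternatingSum_cons,
        length_reverse, length_cons, pow_succ, pow_succ]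
      ring

lemma B_append (p q : List ℝ) (j : ℕ) :
    B (p ++ q) (p.length + j) = p.alternatingSum + (-1 : ℝ) ^ p.length * B q j := by
  unfold B
  rw [take_append, take_of_length_le (by omega), Nat.add_sub_cancel_left]
  exact altSum_append p (q.take j)

lemma B_take (l : List ℝ) {m j : ℕ} (h : j ≤ m) : B (l.take m) j = B l j := by
  unfold B
  rw [take_take, min_eq_left h]

lemma myPowPar {u v : ℕ} (h : u % 2 = v % 2) : ((-1 : ℝ)) ^ u = (-1) ^ v := by
  conv_lhs => rw [← Nat.div_add_mod u 2]
  conv_rhs => rw [← Nat.div_add_mod v 2]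
  rw [h, pow_add, pow_add, pow_mul, pow_mul]
  norm_num

lemma B_middle (p m s : List ℝ) (j : ℕ) (hj : j ≤ m.length) :
    B m j = (-1 : ℝ) ^ p.length * (B (p ++ m ++ s) (p.length + j) - B (p ++ m ++ s) p.length) := by
  have h2 : B (m ++ s) j = B m j := by
    unfold B
    rw [take_append, Nat.sub_eq_zero_of_le hj, take_zero, append_nil]
  have h0 : B (p ++ (m ++ s)) p.length = p.alternatingSum := by
    have := B_append p (m ++ s) 0
    simpa [B_zero] using this
  have h1 := B_append p (m ++ s) j
  rw [h2] at h1
  have hsq : (-1 : ℝ) ^ p.length * (-1 : ℝ) ^ p.length = 1 := by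
    rw [← pow_add, ← two_mul]
    exact Even.neg_one_pow ⟨p.length, by ring⟩
  rw [append_assoc, h1, h0]
  linear_combination (-(B m j)) * hsq

lemma asc_reverse_of (l : List ℝ) (hodd : Odd l.length)
    (h : ∀ j, j % 2 = 1 → j ≤ l.length → l.alternatingSum ≤ B l j) : ASC l.reverse := by
  intro k _ hk2
  rw [length_reverse] at hk2
  obtain ⟨c, hc⟩ := hodd
  have hj : (l.length - 2 * k) % 2 = 1 := by omega
  have hjle : l.length - 2 * k ≤ l.length := by omega
  have htr : l.reverse.take (2 * k) = (l.drop (l.length - 2 * k)).reverse := take_reverse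
  have hlen : (l.drop (l.length - 2 * k)).length = 2 * k := by
    rw [length_drop]; omega
  have hrev : (l.drop (l.length - 2 * k)).reverse.alternatingSum
      = (-1 : ℝ) ^ (2 * k + 1) * (l.drop (l.length - 2 * k)).alternatingSum := by
    rw [altSum_reverse, hlen]
  have hsplit : l.alternatingSum = B l (l.length - 2 * k)
      + (-1 : ℝ) ^ (l.length - 2 * k) * (l.drop (l.length - 2 * k)).alternatingSum := by
    have hh := altSum_append (l.take (l.length - 2 * k)) (l.drop (l.length - 2 * k))
    rw [take_append_drop] at hh
    rw [hh, length_take]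
    have h1 : min (l.length - 2 * k) l.length = l.length - 2 * k := by omega
    rw [h1]
    rfl
  have hsgn1 : (-1 : ℝ) ^ (l.length - 2 * k) = -1 := by
    rw [myPowPar (v := 1) (by omega)]; norm_num
  have hsgn2 : (-1 : ℝ) ^ (2 * k + 1) = -1 := by
    rw [myPowPar (v := 1) (by omega)]; norm_num
  have hge := h _ hj hjle
  rw [htr, hrev, hsgn2]
  rw [hsgn1] at hsplit
  linarith

lemma B_drop (l : List ℝ) (t j : ℕ) (ht : t ≤ l.length) (hj : j ≤ l.length - t) :
    B (l.drop t) j = (-1 : ℝ) ^ t * (B l (t + j) - B l t) := by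
  have hlen : (l.take t).length = t := by rw [length_take]; omega
  have h := B_middle (l.take t) (l.drop t) [] j (by rw [length_drop]; omega)
  rw [append_nil, take_append_drop, hlen] at h
  exact h

theorem main : ∀ (n : ℕ) (l : List ℝ), l.length = n →
    ∃ (S : List (List ℝ)) (X : List ℝ), S.flatten ++ X = l ∧ (∀ s ∈ S, IsSlice s) ∧
      IsEvSeq X ∧ List.Chain' (· > ·) (S.map List.alternatingSum) := by
  intro n
  induction n using Nat.strong_induction_on with
  | _ n IH =>
  intro l hl
  classical
  set F : Finset ℕ := (Finset.range (n + 1)).filter (fun u => u % 2 = n % 2) with hF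
  have hmemF : ∀ u, u ∈ F ↔ (u ≤ n ∧ u % 2 = n % 2) := by
    intro u
    simp [hF, Finset.mem_filter, Finset.mem_range, Nat.lt_succ_iff]
  have hFne : F.Nonempty := ⟨n, (hmemF n).2 ⟨le_rfl, rfl⟩⟩
  obtain ⟨t, htF, htmax, htmin⟩ :
      ∃ t ∈ F, (∀ u ∈ F, dd l u ≤ dd l t) ∧ ∀ u ∈ F, u < t → dd l u < dd l t := by
    obtain ⟨t0, ht0, hsup⟩ := Finset.exists_mem_eq_sup' hFne (dd l)
    have hAne : (F.filter fun u => dd l u = F.sup' hFne (dd l)).Nonempty :=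
      ⟨t0, Finset.mem_filter.2 ⟨ht0, hsup.symm⟩⟩
    obtain ⟨ht1, ht2⟩ := Finset.mem_filter.1 (Finset.min'_mem _ hAne)
    refine ⟨_, ht1, ?_, ?_⟩
    · intro u hu
      rw [ht2]
      exact Finset.le_sup' (dd l) hu
    · intro u hu hlt
      rcases lt_or_eq_of_le (ht2 ▸ Finset.le_sup' (dd l) hu) with h | h
      · exact h
      · exfalso
        have hmem : u ∈ F.filter fun u => dd l u = F.sup' hFne (dd l) :=
          Finset.mem_filter.2 ⟨hu, h.trans ht2⟩
        have hge := Finset.min'_le (F.filter fun u => dd l u = F.sup' hFne (dd l)) u hmem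
        omega
  have htle : t ≤ n := ((hmemF t).1 htF).1
  have htpar : t % 2 = n % 2 := ((hmemF t).1 htF).2
  by_cases ht0 : t = 0
  · -- the whole list is an ev-sequence
    refine ⟨[], l, by simp, by simp, ⟨?_, ?_⟩, List.isChain_nil⟩
    · rw [hl, Nat.even_iff]; omega
    · intro k _ hk2
      rw [hl] at hk2
      have hu : 2 * k ∈ F := (hmemF _).2 ⟨by omega, by omega⟩
      have hle := htmax _ hu
      rw [ht0] at hle
      unfold dd at hle
      rw [B_zero] at hle
      have hpow : ((-1 : ℝ)) ^ (2 * k) = 1 := Even.neg_one_pow ⟨k, by ring⟩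
      rw [hpow, one_mul] at hle
      norm_num at hle
      simpa [B] using hle
  · -- t ≥ 1 : recurse on l.take (t-1)
    have ht1 : 1 ≤ t := by omega
    have hnpos : 1 ≤ n := by omega
    have htn : t - 1 < n := by omega
    obtain ⟨S', X', hflat, hsl, hXev, hchain⟩ :=
      IH (t - 1) htn (l.take (t - 1)) (by rw [length_take, hl]; omega)
    have hlenq : S'.flatten.length + X'.length = t - 1 := by
      have := congrArg List.length hflat
      rw [length_append, length_take, hl] at this
      omega
    obtain ⟨c, hc⟩ := hXev.1
    have htlen : t - 1 < l.length := by omega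
    set q := S'.flatten.length with hq
    set y := l[t - 1]'htlen with hy
    set s1 : ℝ := (-1 : ℝ) ^ (t - 1) with hs1
    have hs1sq : s1 * s1 = 1 := by
      rw [hs1, ← pow_add, ← two_mul]
      exact Even.neg_one_pow ⟨t - 1, by ring⟩
    have hqs : (-1 : ℝ) ^ q = s1 := by rw [hs1]; exact myPowPar (by omega)
    have hnegt : (-1 : ℝ) ^ t = -s1 := by
      conv_lhs => rw [show t = (t - 1) + 1 by omega]
      rw [pow_succ, hs1]; ring
    have hty : l.take t = l.take (t - 1) ++ [y] := by
      rw [show t = (t - 1) + 1 by omega, take_succ, getElem?_eq_getElem htlen]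
      rfl
    have hlt1 : (l.take (t - 1)).length = t - 1 := by rw [length_take, hl]; omega
    have hBt : B l t = B l (t - 1) + s1 * y := by
      have h1 : B l t = (l.take (t - 1) ++ [y]).alternatingSum := by
        rw [← hty]; rfl
      rw [h1, altSum_append, alternatingSum_singleton, hlt1, ← hs1]
      rfl
    have hyv : s1 * B l t = s1 * B l (t - 1) + y := by
      rw [hBt]
      linear_combination y * hs1sq
    have key_le : ∀ u, u ≤ n → u % 2 = t % 2 → -s1 * B l u ≤ -s1 * B l t := by
      intro u hu hupar
      have h := htmax u ((hmemF u).2 ⟨hu, by omega⟩)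
      unfold dd at h
      rw [myPowPar hupar, hnegt] at h
      exact h
    have key_lt : ∀ u, u < t → u % 2 = t % 2 → -s1 * B l u < -s1 * B l t := by
      intro u hu hupar
      have h := htmin u ((hmemF u).2 ⟨by omega, by omega⟩) hu
      unfold dd at h
      rw [myPowPar hupar, hnegt] at h
      exact h
    have hBX' : ∀ j, j ≤ X'.length → B X' j = (-1 : ℝ) ^ q * (B l (q + j) - B l q) := by
      intro j hj
      have h := B_middle S'.flatten X' [] j hj
      rw [append_nil, hflat, ← hq] at h
      rw [B_take l (show q + j ≤ t - 1 by omega), B_take l (show q ≤ t - 1 by omega)] at h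
      exact h
    have haltX' : X'.alternatingSum = s1 * (B l (t - 1) - B l q) := by
      have h := hBX' X'.length le_rfl
      rw [B_of_le X' le_rfl, show q + X'.length = t - 1 by omega, hqs] at h
      exact h
    have hZlen : (X' ++ [y]).length = X'.length + 1 := by simp
    have hZodd : Odd (X' ++ [y]).length := by rw [hZlen]; exact ⟨c, by omega⟩
    have hZtake : ∀ j, j ≤ X'.length → (X' ++ [y]).take j = X'.take j := by
      intro j hj
      rw [take_append, Nat.sub_eq_zero_of_le hj, take_zero, append_nil]
    have hZalt : (X' ++ [y]).alternatingSum = s1 * (B l t - B l q) := by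
      rw [altSum_append, alternatingSum_singleton, Even.neg_one_pow hXev.1, one_mul, haltX']
      linear_combination - hyv
    have hZslice : IsSlice (X' ++ [y]) := by
      refine ⟨hZodd, ?_, ?_⟩
      · intro k hk1 hk2
        rw [hZlen] at hk2
        have h2k : 2 * k ≤ X'.length := by omega
        rw [hZtake _ h2k]
        exact hXev.2 k hk1 h2k
      · apply asc_reverse_of _ hZodd
        intro j hj1 hj2
        rw [hZlen] at hj2
        by_cases hje : j = X'.length + 1
        · rw [B_of_le _ (by rw [hZlen]; omega)]
        · have hjle : j ≤ X'.length := by omega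
          have hBZj : B (X' ++ [y]) j = B X' j := by unfold B; rw [hZtake _ hjle]
          rw [hBZj, hZalt, hBX' j hjle, hqs]
          have hu := key_le (q + j) (by omega) (by omega)
          nlinarith [hu]
    have hXev2 : IsEvSeq (l.drop t) := by
      refine ⟨?_, ?_⟩
      · rw [length_drop, hl, Nat.even_iff]; omega
      · intro k _ hk2
        rw [length_drop, hl] at hk2
        have h := B_drop l t (2 * k) (by omega) (by rw [hl]; omega)
        rw [hnegt] at h
        have hu := key_le (t + 2 * k) (by omega) (by omega)
        have hfin : B (l.drop t) (2 * k) ≤ 0 := by rw [h]; nlinarith [hu]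
        simpa [B] using hfin
    have hflat2 : (S' ++ [X' ++ [y]]).flatten ++ l.drop t = l := by
      rw [flatten_append, flatten_cons, flatten_nil, append_nil]
      have h1 : S'.flatten ++ (X' ++ [y]) = l.take t := by
        rw [← append_assoc, hflat, ← hty]
      rw [h1, take_append_drop]
    refine ⟨S' ++ [X' ++ [y]], l.drop t, hflat2, ?_, hXev2, ?_⟩
    · intro s hs
      rcases mem_append.1 hs with h | h
      · exact hsl s h
      · rw [mem_singleton] at h
        subst h
        exact hZslice
    · rw [map_append]
      refine isChain_append.2 ⟨hchain, by simp, ?_⟩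
      intro x hx y' hy'
      have hy'' : y' = (X' ++ [y]).alternatingSum := by
        simp only [map_cons, map_nil, head?_cons, Option.mem_def, Option.some.injEq] at hy'
        exact hy'.symm
      rcases eq_nil_or_concat S' with hS' | ⟨S'', P, hS'⟩
      · rw [hS'] at hx
        simp at hx
      · rw [concat_eq_append] at hS'
        have hfl' : S'.flatten = S''.flatten ++ P := by
          rw [hS', flatten_append, flatten_cons, flatten_nil, append_nil]
        have hx' : x = P.alternatingSum := by
          rw [hS', map_append] at hx
          simp only [map_cons, map_nil] at hx
          rw [getLast?_concat] at hx
          exact (by simpa using hx : P.alternatingSum = x).symm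
        have hPmem : P ∈ S' := by
          rw [hS']
          exact mem_append.2 (Or.inr (mem_singleton.2 rfl))
        obtain ⟨pp, hpp⟩ := (hsl P hPmem).1
        have hqr : S''.flatten.length + P.length = q := by
          rw [hq, hfl', length_append]
        have hPalt : P.alternatingSum
            = (-1 : ℝ) ^ S''.flatten.length * (B l q - B l S''.flatten.length) := by
          have h := B_middle S''.flatten P X' P.length le_rfl
          rw [show S''.flatten ++ P ++ X' = l.take (t - 1) by rw [← hfl', hflat]] at h
          rw [hqr] at h
          rw [B_take l (show q ≤ t - 1 by omega),
            B_take l (show S''.flatten.length ≤ t - 1 by omega)] at h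
          rw [B_of_le P le_rfl] at h
          exact h
        have hrpar : (-1 : ℝ) ^ S''.flatten.length = -s1 := by
          rw [myPowPar (show S''.flatten.length % 2 = t % 2 by omega), hnegt]
        have hrlt : S''.flatten.length < t := by omega
        have hkey := key_lt S''.flatten.length hrlt (by omega)
        rw [hx', hy'', hZalt, hPalt, hrpar]
        nlinarith [hkey]

end SlicePartitionAux

theorem exists_decreasing_slice_partition (a : List ℝ) :
    ∃ (S : List (List ℝ)) (X : List ℝ), S.flatten ++ X = a ∧ (∀ s ∈ S, IsSlice s) ∧
      IsEvSeq X ∧ List.Chain' (· > ·) (S.map List.alternatingSum) :=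
  SlicePartitionAux.main a.length a rfl
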